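/- arXiv:1601.01376 — 2 statements merged into one kernel-verified Lean document; each statement's English description precedes it below -/
import Mathlib

section
/- For any fixed z > 0, the function h(M,K) = K(1 - exp(-z(M-K)/K)) is jointly concave on the domain {(M,K) : 0 < K, K < M}, i.e., its Hessian ( z²/K · e^{-zM/K+z} ) · [[-1, M/K],[M/K, -M²/K²]] is negative semidefinite. -/
open Real Set Matrix

lemma g_concave (z : ℝ) : ConcaveOn ℝ (Set.univ : Set ℝ)
    (fun t => 1 - Real.exp (-z * (t - 1))) := by
  constructor
  · exact convex_univ
  · intro x _ y _ a b ha hb hab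
    have h := convexOn_exp.2 (Set.mem_univ (-z * (x - 1))) (Set.mem_univ (-z * (y - 1)))
      ha hb hab
    simp only [smul_eq_mul] at h ⊢
    have harg : a * (-z * (x - 1)) + b * (-z * (y - 1)) = -z * ((a * x + b * y) - 1) := by
      have hb1 : b = 1 - a := by linarith
      rw [hb1]; ring
    rw [harg] at h
    linarith

/-- For any fixed `z > 0`, the function `h(M,K) = K*(1 - exp(-z*(M-K)/K))`
is jointly concave on the domain `{(M,K) : 0 < K < M}`, and its Hessian
is the negative semidefinite matrix
`(z²/K)·exp(-zM/K+z)·[[-1, M/K],[M/K, -M²/K²]]`. -/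
theorem stmt_2 (z : ℝ) (hz : 0 < z) :
    ConcaveOn ℝ {p : ℝ × ℝ | 0 < p.2 ∧ p.2 < p.1}
      (fun p : ℝ × ℝ => p.2 * (1 - Real.exp (-z * (p.1 - p.2) / p.2))) ∧
    ∀ M K : ℝ, 0 < K → K < M →
      (-((z ^ 2 / K * Real.exp (-z * M / K + z)) •
          !![(-1 : ℝ), M / K; M / K, -(M ^ 2 / K ^ 2)])).PosSemidef := by
  constructor
  · constructor
    · intro p hp q hq a b ha hb hab
      constructor
      · rcases eq_or_lt_of_le ha with h | h
        · have hb1 : b = 1 := by linarith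
          simpa [← h, hb1] using hq.1
        · have : 0 < a * p.2 := mul_pos h hp.1
          have : 0 ≤ b * q.2 := mul_nonneg hb hq.1.le
          simp only [Prod.smul_snd, smul_eq_mul, Prod.snd_add]
          linarith
      · simp only [Prod.smul_fst, Prod.smul_snd, smul_eq_mul, Prod.fst_add, Prod.snd_add]
        rcases eq_or_lt_of_le ha with h | h
        · have hb1 : b = 1 := by linarith
          simp only [← h, hb1]; simpa using hq.2
        · have h1 := mul_lt_mul_of_pos_left hp.2 h
          have h2 := mul_le_mul_of_nonneg_left hq.2.le hb
          linarith
    · intro p hp q hq a b ha hb hab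
      obtain ⟨hK1, hM1⟩ := hp
      obtain ⟨hK2, hM2⟩ := hq
      set K1 := p.2; set M1 := p.1; set K2 := q.2; set M2 := q.1
      have hK : 0 < a * K1 + b * K2 := by
        rcases eq_or_lt_of_le ha with h | h
        · have hb1 : b = 1 := by linarith
          simpa [← h, hb1] using hK2
        · nlinarith [mul_nonneg hb hK2.le]
      -- weights for g-concavity
      set a' := a * K1 / (a * K1 + b * K2) with ha'
      set b' := b * K2 / (a * K1 + b * K2) with hb'
      have ha'0 : 0 ≤ a' := by positivity
      have hb'0 : 0 ≤ b' := by positivity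
      have hab' : a' + b' = 1 := by rw [ha', hb']; field_simp
      have hg := (g_concave z).2 (Set.mem_univ (M1 / K1)) (Set.mem_univ (M2 / K2))
        ha'0 hb'0 hab'
      simp only [smul_eq_mul] at hg
      -- rewrite arguments
      have e1 : -z * (M1 - K1) / K1 = -z * (M1 / K1 - 1) := by field_simp
      have e2 : -z * (M2 - K2) / K2 = -z * (M2 / K2 - 1) := by field_simp
      have e3 : a' * (M1 / K1) + b' * (M2 / K2) = (a * M1 + b * M2) / (a * K1 + b * K2) := by
        rw [ha', hb']; field_simp
      rw [e3] at hg
      dsimp only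
      simp only [Prod.smul_fst, Prod.smul_snd, smul_eq_mul, Prod.fst_add, Prod.snd_add]
      have e4 : -z * ((a * M1 + b * M2) - (a * K1 + b * K2)) / (a * K1 + b * K2)
          = -z * ((a * M1 + b * M2) / (a * K1 + b * K2) - 1) := by field_simp
      rw [e4, e1, e2]
      have hmul := mul_le_mul_of_nonneg_left hg hK.le
      have ea : (a * K1 + b * K2) * a' = a * K1 := by rw [ha']; field_simp
      have eb : (a * K1 + b * K2) * b' = b * K2 := by rw [hb']; field_simp
      calc a * (K1 * (1 - Real.exp (-z * (M1 / K1 - 1))))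
            + b * (K2 * (1 - Real.exp (-z * (M2 / K2 - 1))))
          = (a * K1 + b * K2) * (a' * (1 - Real.exp (-z * (M1 / K1 - 1)))
            + b' * (1 - Real.exp (-z * (M2 / K2 - 1)))) := by
            rw [ha', hb']; field_simp
        _ ≤ (a * K1 + b * K2)
            * (1 - Real.exp (-z * ((a * M1 + b * M2) / (a * K1 + b * K2) - 1))) := hmul
  · intro M K hK hKM
    have hc : 0 ≤ z ^ 2 / K * Real.exp (-z * M / K + z) := by positivity
    rw [posSemidef_iff_dotProduct_mulVec]
    constructor
    · ext i j
      fin_cases i <;> fin_cases j <;>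
        simp [Matrix.conjTranspose_apply, Matrix.neg_apply, Matrix.smul_apply]
    · intro x
      simp [dotProduct, Matrix.mulVec, Fin.sum_univ_two]
      have eq : x 0 * (-(z ^ 2 / K * Real.exp (-(z * M) / K + z) * (M / K) * x 1)
            + z ^ 2 / K * Real.exp (-(z * M) / K + z) * x 0)
          + x 1 * (z ^ 2 / K * Real.exp (-(z * M) / K + z) * (M ^ 2 / K ^ 2) * x 1
            + -(z ^ 2 / K * Real.exp (-(z * M) / K + z) * (M / K) * x 0))
          = (x 0 - M / K * x 1) ^ 2 * (z ^ 2 / K * Real.exp (-(z * M) / K + z)) := by ring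
      have key : (0:ℝ) ≤ (x 0 - M / K * x 1) ^ 2 *
          (z ^ 2 / K * Real.exp (-(z * M) / K + z)) := by positivity
      linarith [eq, key]
end

section
/- Let f : (0,∞) → ℝ be strictly concave and differentiable with unique maximizer K* > 0, f > 0 on (0,K*], and D(K) = c₀ + K³P_pre with c₀, P_pre > 0. Define F(K) = f'(K)·D(K) - f(K)·3K²P_pre. Then F is strictly decreasing on (0, K*), F(0⁺) > 0 (since f'(0⁺) > 0), F(K*) < 0, and F has a unique zero in (0, K*). -/
open Real Set Filter Topology

/-- Let `f` be `C²` and strictly concave (`f'' < 0`) on `(0,∞)` with unique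
maximizer `K* > 0` (`f' > 0` on `(0,K*)`, `f'(K*) = 0`), `f > 0` on `(0,K*]`,
and `D(K) = c₀ + K³ P_pre` with `c₀, P_pre > 0`. Then
`F(K) = f'(K) D(K) - 3K² P_pre f(K)` is strictly decreasing on `(0,K*)`,
eventually positive near `0⁺`, negative at `K*`, and has a unique zero in
`(0, K*)`. -/
theorem stmt_14 (f : ℝ → ℝ) (Kstar c₀ Ppre : ℝ)
    (hKstar : 0 < Kstar) (hc₀ : 0 < c₀) (hPpre : 0 < Ppre)
    (hf : ContDiff ℝ 2 f)
    (hconc : ∀ K ∈ Set.Ioi (0 : ℝ), deriv (deriv f) K < 0)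
    (hderivpos : ∀ K ∈ Set.Ioo (0 : ℝ) Kstar, 0 < deriv f K)
    (hderivKstar : deriv f Kstar = 0)
    (hpos : ∀ K ∈ Set.Ioc (0 : ℝ) Kstar, 0 < f K) :
    StrictAntiOn
        (fun K => deriv f K * (c₀ + K ^ 3 * Ppre) - 3 * K ^ 2 * Ppre * f K)
        (Set.Ioo (0 : ℝ) Kstar) ∧
    (∀ᶠ K in nhdsWithin (0 : ℝ) (Set.Ioi 0),
        0 < deriv f K * (c₀ + K ^ 3 * Ppre) - 3 * K ^ 2 * Ppre * f K) ∧
    deriv f Kstar * (c₀ + Kstar ^ 3 * Ppre) - 3 * Kstar ^ 2 * Ppre * f Kstar < 0 ∧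
    (∃! K : ℝ, K ∈ Set.Ioo (0 : ℝ) Kstar ∧
        deriv f K * (c₀ + K ^ 3 * Ppre) - 3 * K ^ 2 * Ppre * f K = 0) := by
  set F : ℝ → ℝ :=
    fun K => deriv f K * (c₀ + K ^ 3 * Ppre) - 3 * K ^ 2 * Ppre * f K with hFdef
  have hd1 : Differentiable ℝ f := hf.differentiable (by norm_num)
  have hf' : ContDiff ℝ 1 (deriv f) := by
    have h := (contDiff_succ_iff_deriv (n := 1)).mp (by norm_num at hf ⊢; exact hf)
    exact h.2.2
  have hd2 : Differentiable ℝ (deriv f) := hf'.differentiable (by norm_num)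
  have hFderiv : ∀ x : ℝ,
      HasDerivAt F (deriv (deriv f) x * (c₀ + x ^ 3 * Ppre) - 6 * x * Ppre * f x) x := by
    intro x
    have h1 : HasDerivAt (fun K : ℝ => deriv f K * (c₀ + K ^ 3 * Ppre))
        (deriv (deriv f) x * (c₀ + x ^ 3 * Ppre) + deriv f x * (3 * x ^ 2 * Ppre)) x := by
      have hD : HasDerivAt (fun K : ℝ => c₀ + K ^ 3 * Ppre) (3 * x ^ 2 * Ppre) x := by
        have := ((hasDerivAt_pow 3 x).mul_const Ppre).const_add c₀
        exact this.congr_deriv (by push_cast; ring)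
      exact (hd2 x).hasDerivAt.mul hD
    have h2 : HasDerivAt (fun K : ℝ => 3 * K ^ 2 * Ppre * f K)
        (6 * x * Ppre * f x + 3 * x ^ 2 * Ppre * deriv f x) x := by
      have hg : HasDerivAt (fun K : ℝ => 3 * K ^ 2 * Ppre) (6 * x * Ppre) x := by
        have := ((hasDerivAt_pow 2 x).const_mul 3).mul_const Ppre
        exact this.congr_deriv (by push_cast; ring)
      exact hg.mul (hd1 x).hasDerivAt
    have := h1.sub h2
    exact this.congr_deriv (by ring)
  have hFcont : Continuous F := by
    apply Continuous.sub
    · exact (hf'.continuous).mul (by continuity)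
    · exact (by continuity : Continuous fun K : ℝ => 3 * K ^ 2 * Ppre).mul hd1.continuous
  -- Strict antitonicity
  have hanti : StrictAntiOn F (Set.Ioo (0 : ℝ) Kstar) := by
    apply strictAntiOn_of_deriv_neg (convex_Ioo _ _) hFcont.continuousOn
    intro x hx
    rw [interior_Ioo] at hx
    rw [(hFderiv x).deriv]
    have hD : 0 < c₀ + x ^ 3 * Ppre := by nlinarith [mul_pos (pow_pos hx.1 3) hPpre]
    have hcc := hconc x hx.1
    have hfx := hpos x ⟨hx.1, le_of_lt hx.2⟩
    have hx0 := hx.1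
    nlinarith [mul_pos hx0 (mul_pos hPpre hfx), mul_pos hD (neg_pos.mpr hcc)]
  -- deriv f is strictly antitone on Ici 0
  have hderivanti : StrictAntiOn (deriv f) (Set.Ici (0 : ℝ)) := by
    apply strictAntiOn_of_deriv_neg (convex_Ici _) hd2.continuous.continuousOn
    intro x hx
    rw [interior_Ici] at hx
    exact hconc x hx
  have hd0 : 0 < deriv f 0 := by
    have h1 : deriv f (Kstar / 2) < deriv f 0 :=
      hderivanti (Set.mem_Ici.mpr (le_refl 0)) (Set.mem_Ici.mpr (by positivity)) (by linarith)
    have h2 := hderivpos (Kstar / 2) ⟨by linarith, by linarith⟩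
    linarith
  have hF0 : 0 < F 0 := by
    simp only [hFdef]
    norm_num
    nlinarith [mul_pos hd0 hc₀]
  -- Eventually positive near 0⁺
  have hev : ∀ᶠ K in nhdsWithin (0 : ℝ) (Set.Ioi 0), 0 < F K := by
    have : ∀ᶠ K in nhds (0 : ℝ), 0 < F K :=
      (hFcont.continuousAt (x := 0)).eventually (eventually_gt_nhds hF0)
    exact this.filter_mono nhdsWithin_le_nhds
  have hfKs := hpos Kstar ⟨hKstar, le_refl _⟩
  have hFKs : F Kstar < 0 := by
    simp only [hFdef, hderivKstar]
    nlinarith [mul_pos (mul_pos hPpre hfKs) (mul_pos hKstar hKstar)]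
  refine ⟨hanti, hev, hFKs, ?_⟩
  -- existence of a point a ∈ (0, Kstar) with F a > 0
  obtain ⟨a, ha⟩ : ∃ a, a ∈ Set.Ioi (0:ℝ) ∧ 0 < F a ∧ a < Kstar := by
    have h1 : ∀ᶠ K in nhdsWithin (0 : ℝ) (Set.Ioi 0), K < Kstar := by
      have : ∀ᶠ K in nhds (0 : ℝ), K < Kstar := eventually_lt_nhds hKstar
      exact this.filter_mono nhdsWithin_le_nhds
    have h2 := (eventually_mem_nhdsWithin (s := Set.Ioi (0:ℝ))).and (hev.and h1)
    exact h2.exists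
  obtain ⟨ha0, hFa, haK⟩ := ha
  have hivt : (0 : ℝ) ∈ F '' Set.Ioo a Kstar := by
    apply intermediate_value_Ioo' (le_of_lt haK) hFcont.continuousOn
    exact ⟨hFKs, hFa⟩
  obtain ⟨c, hc, hFc⟩ := hivt
  have hcmem : c ∈ Set.Ioo (0 : ℝ) Kstar := ⟨lt_trans ha0 hc.1, hc.2⟩
  refine ⟨c, ⟨hcmem, hFc⟩, ?_⟩
  rintro y ⟨hy, hFy⟩
  exact hanti.injOn hy hcmem (hFy.trans hFc.symm)
end
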